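/- Let μ > 0, α < 0, N a positive integer, ω > α²/N², and let w(x) = φ_{ω,−a⁰}(x) with a⁰ = (1/(μ√ω)) arctanh(|α|/(N√ω)). Then N ∫₀^∞ ( w'(x)² + ω w(x)² − (2μ+1) w(x)^{2μ+2} ) dx + α w(0)² = −2μ N ∫₀^∞ w(x)^{2μ+2} dx < 0. That is, the quadratic form of L₋ evaluated at the ground state Ψ⁰_ω is strictly negative, so L₋ has at least one negative eigenvalue. -/

import Mathlib

open MeasureTheory Set

/-- The soliton profile `φ_{ω,a}(x) = ((μ+1)ω)^{1/(2μ)} sech^{1/μ}(μ√ω (x − a))`. -/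
noncomputable def solitonProfile (μ ω a : ℝ) (x : ℝ) : ℝ :=
  ((μ + 1) * ω) ^ (1 / (2 * μ)) *
    (1 / Real.cosh (μ * Real.sqrt ω * (x - a))) ^ (1 / μ)

/-- The inverse hyperbolic tangent. -/
noncomputable def arctanh (x : ℝ) : ℝ := (1 / 2) * Real.log ((1 + x) / (1 - x))

lemma tanh_arctanh' {r : ℝ} (h0 : 0 ≤ r) (h1 : r < 1) : Real.tanh (arctanh r) = r := by
  have h1' : 0 < 1 - r := by linarith
  have hR : 0 < (1 + r) / (1 - r) := by positivity
  set t := arctanh r with ht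
  have hE2 : Real.exp t ^ 2 = (1 + r) / (1 - r) := by
    rw [sq, ← Real.exp_add, ht]
    unfold arctanh
    rw [show (1/2 : ℝ) * Real.log ((1+r)/(1-r)) + (1/2) * Real.log ((1+r)/(1-r))
        = Real.log ((1+r)/(1-r)) by ring]
    exact Real.exp_log hR
  have key : Real.exp t ^ 2 * (1 - r) = 1 + r := by
    rw [hE2]; field_simp
  have hEpos := Real.exp_pos t
  rw [Real.tanh_eq_sinh_div_cosh, Real.sinh_eq, Real.cosh_eq, Real.exp_neg]
  rw [div_eq_iff (by positivity)]
  field_simp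
  nlinarith [key]

lemma arctanh_nonneg' {r : ℝ} (h0 : 0 ≤ r) (h1 : r < 1) : 0 ≤ arctanh r := by
  have h1' : 0 < 1 - r := by linarith
  have h2 : (1:ℝ) ≤ (1 + r) / (1 - r) := by
    rw [le_div_iff₀ h1']; linarith
  have := Real.log_nonneg h2
  unfold arctanh; linarith


/-- Auxiliary: the derivative of the half-soliton. -/
noncomputable def Vaux (s k a₀ : ℝ) (w : ℝ → ℝ) (x : ℝ) : ℝ :=
  -s * (Real.sinh (k * (x + a₀)) * (Real.cosh (k * (x + a₀)))⁻¹) * w x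

set_option maxHeartbeats 1000000 in
theorem stmt_14 (μ α : ℝ) (hμ : 0 < μ) (hα : α < 0) (N : ℕ) (hN : 0 < N)
    (ω : ℝ) (hω : ω > α ^ 2 / (N : ℝ) ^ 2)
    (a₀ : ℝ) (ha₀ : a₀ = 1 / (μ * Real.sqrt ω) * arctanh (|α| / (N * Real.sqrt ω)))
    (w : ℝ → ℝ) (hw : w = solitonProfile μ ω (-a₀)) :
    -- the quadratic form of `L₋` at the ground state `Ψ⁰_ω` equals
    -- `−2μN ∫₀^∞ w^{2μ+2}` and is strictly negative, so `L₋` has a negative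
    -- eigenvalue
    (N : ℝ) * (∫ x in Ioi (0 : ℝ),
        ((deriv w x) ^ 2 + ω * (w x) ^ 2 - (2 * μ + 1) * w x ^ (2 * μ + 2)))
      + α * (w 0) ^ 2
      = -(2 * μ * N) * ∫ x in Ioi (0 : ℝ), w x ^ (2 * μ + 2) ∧
    (N : ℝ) * (∫ x in Ioi (0 : ℝ),
        ((deriv w x) ^ 2 + ω * (w x) ^ 2 - (2 * μ + 1) * w x ^ (2 * μ + 2)))
      + α * (w 0) ^ 2 < 0 := by
  have hN' : (0:ℝ) < N := by exact_mod_cast hN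
  have hα2 : 0 < α ^ 2 := by nlinarith
  have hω0 : 0 < ω := lt_trans (div_pos hα2 (by positivity)) hω
  set s := Real.sqrt ω with hs_def
  have hs : 0 < s := Real.sqrt_pos.2 hω0
  have hs2 : s ^ 2 = ω := Real.sq_sqrt hω0.le
  set k := μ * s with hk_def
  have hk : 0 < k := mul_pos hμ hs
  set c := ((μ + 1) * ω) ^ (1 / (2 * μ)) with hc_def
  have hb : (0:ℝ) < (μ + 1) * ω := by positivity
  have hc : 0 < c := Real.rpow_pos_of_pos hb _
  set r := |α| / (N * s) with hr_def
  have habs : 0 < |α| := abs_pos.2 hα.ne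
  have hr0 : 0 < r := by positivity
  have hr1 : r < 1 := by
    rw [hr_def, div_lt_one (by positivity)]
    have h2 : α ^ 2 < (N * s) ^ 2 := by
      rw [mul_pow, hs2]
      rw [gt_iff_lt, div_lt_iff₀ (by positivity)] at hω
      linarith
    have := Real.sqrt_lt_sqrt (sq_nonneg α) h2
    rwa [Real.sqrt_sq_eq_abs, Real.sqrt_sq (by positivity)] at this
  have hka₀ : k * a₀ = arctanh r := by
    rw [ha₀]
    field_simp
  have ha₀0 : 0 ≤ a₀ := by
    rw [ha₀]
    exact mul_nonneg (by positivity) (arctanh_nonneg' hr0.le hr1)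
  have htanh : Real.tanh (k * a₀) = r := by
    rw [hka₀]; exact tanh_arctanh' hr0.le hr1
  have hchpos : ∀ x : ℝ, 0 < Real.cosh (k * (x + a₀)) := fun x => Real.cosh_pos _
  have hqpos : ∀ x : ℝ, 0 < (Real.cosh (k * (x + a₀)))⁻¹ := fun x => by positivity
  have hwW : w = fun x => c * ((Real.cosh (k * (x + a₀)))⁻¹) ^ (1/μ) := by
    funext x
    rw [hw]
    unfold solitonProfile
    rw [sub_neg_eq_add, ← hs_def, ← hk_def, ← hc_def, one_div (Real.cosh (k * (x + a₀)))]
  have hwpos : ∀ x : ℝ, 0 < w x := by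
    intro x
    rw [hwW]
    exact mul_pos hc (Real.rpow_pos_of_pos (hqpos x) _)
  have hu : ∀ x : ℝ, HasDerivAt (fun x : ℝ => k * (x + a₀)) k x := by
    intro x
    simpa using ((hasDerivAt_id x).add_const a₀).const_mul k
  have hch : ∀ x : ℝ, HasDerivAt (fun x : ℝ => Real.cosh (k * (x + a₀)))
      (Real.sinh (k * (x + a₀)) * k) x := fun x => (hu x).cosh
  have hqd : ∀ x : ℝ, HasDerivAt (fun x : ℝ => (Real.cosh (k * (x + a₀)))⁻¹)
      (-(Real.sinh (k * (x + a₀)) * k) / Real.cosh (k * (x + a₀)) ^ 2) x :=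
    fun x => (hch x).inv (hchpos x).ne'
  have hderivw : ∀ x : ℝ, HasDerivAt w (Vaux s k a₀ w x) x := by
    intro x
    rw [hwW]
    have h1 : HasDerivAt (fun x : ℝ => ((Real.cosh (k * (x + a₀)))⁻¹) ^ (1/μ))
        ((-(Real.sinh (k * (x + a₀)) * k) / Real.cosh (k * (x + a₀)) ^ 2) * (1/μ) *
          ((Real.cosh (k * (x + a₀)))⁻¹) ^ (1/μ - 1)) x :=
      (hqd x).rpow_const (Or.inl (hqpos x).ne')
    have h2 := h1.const_mul c
    refine h2.congr_deriv ?_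
    symm
    simp only [Vaux]
    have hrs : ((Real.cosh (k * (x + a₀)))⁻¹ : ℝ) ^ (1/μ - 1)
        = ((Real.cosh (k * (x + a₀)))⁻¹) ^ (1/μ) * Real.cosh (k * (x + a₀)) := by
      rw [Real.rpow_sub (hqpos x), Real.rpow_one, div_eq_mul_inv, inv_inv]
    rw [hrs, hk_def]
    have hchne := (hchpos x).ne'
    field_simp
  have hderivV : ∀ x : ℝ, HasDerivAt (Vaux s k a₀ w)
      (ω * (1 - (μ + 1) * ((Real.cosh (k * (x + a₀)))⁻¹) ^ 2) * w x) x := by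
    intro x
    have hsh : HasDerivAt (fun x : ℝ => Real.sinh (k * (x + a₀)))
        (Real.cosh (k * (x + a₀)) * k) x := (hu x).sinh
    have h1 := ((hsh.mul (hqd x)).const_mul (-s)).mul (hderivw x)
    refine h1.congr_deriv ?_
    symm
    simp only [Vaux]
    have hchne := (hchpos x).ne'
    have hsq : Real.sinh (k * (x + a₀)) ^ 2 = Real.cosh (k * (x + a₀)) ^ 2 - 1 :=
      Real.sinh_sq _
    rw [← hs2, hk_def]
    simp only [Pi.mul_apply]
    rw [hk_def, mul_comm μ s] at hsq
    field_simp
    linear_combination (-(w x * (μ + 1))) * hsq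
  -- power identity
  have hpow : ∀ x : ℝ, w x ^ (2*μ+2)
      = (μ+1) * ω * ((Real.cosh (k * (x + a₀)))⁻¹) ^ 2 * w x ^ 2 := by
    intro x
    set q := (Real.cosh (k * (x + a₀)))⁻¹ with hq_def
    have hq : 0 < q := hqpos x
    have hQ : 0 ≤ q ^ (1/μ : ℝ) := (Real.rpow_pos_of_pos hq _).le
    have hc2 : c ^ 2 = ((μ+1)*ω) ^ (1/μ : ℝ) := by
      rw [hc_def, ← Real.rpow_natCast (((μ+1)*ω) ^ ((1/(2*μ)):ℝ)) 2, ← Real.rpow_mul hb.le]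
      congr 1
      push_cast
      field_simp
    have hq2 : (q ^ (1/μ : ℝ)) ^ 2 = q ^ (2/μ : ℝ) := by
      rw [← Real.rpow_natCast (q ^ (1/μ:ℝ)) 2, ← Real.rpow_mul hq.le]
      congr 1
      push_cast
      ring
    have hqq : q ^ (2:ℝ) = q ^ (2:ℕ) := by
      rw [show (2:ℝ) = ((2:ℕ):ℝ) by norm_num, Real.rpow_natCast]
    rw [hwW]
    simp only [← hq_def]
    rw [Real.mul_rpow hc.le hQ, ← Real.rpow_mul hq.le,
      show (1/μ) * (2*μ+2) = 2 + 2/μ by field_simp,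
      Real.rpow_add hq, hc_def, ← Real.rpow_mul hb.le,
      show (1/(2*μ)) * (2*μ+2) = 1 + 1/μ by field_simp,
      Real.rpow_add hb, Real.rpow_one, hqq]
    rw [mul_pow, ← hc_def, hc2, hq2]
    ring
  -- squared formula for w
  have hw2 : ∀ x : ℝ, w x ^ 2 = c ^ 2 * ((Real.cosh (k * (x + a₀)))⁻¹) ^ (2/μ : ℝ) := by
    intro x
    rw [hwW]
    simp only
    rw [mul_pow, ← Real.rpow_natCast (((Real.cosh (k * (x + a₀)))⁻¹) ^ (1/μ:ℝ)) 2,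
      ← Real.rpow_mul (hqpos x).le]
    congr 2
    push_cast
    ring
  -- exponential bound
  have hbound : ∀ x ∈ Ioi (0:ℝ), w x ^ 2 ≤ (c^2 * 2 ^ (2/μ:ℝ)) * Real.exp (-(2*s) * x) := by
    intro x hx
    have hub : (Real.cosh (k*(x+a₀)))⁻¹ ≤ 2 * Real.exp (-(k*(x+a₀))) := by
      have h1 : Real.exp (k*(x+a₀)) / 2 ≤ Real.cosh (k*(x+a₀)) := by
        rw [Real.cosh_eq]
        have := (Real.exp_pos (-(k*(x+a₀)))).le
        linarith
      have h2 : (Real.cosh (k*(x+a₀)))⁻¹ ≤ (Real.exp (k*(x+a₀)) / 2)⁻¹ :=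
        inv_anti₀ (by positivity) h1
      calc (Real.cosh (k*(x+a₀)))⁻¹ ≤ (Real.exp (k*(x+a₀)) / 2)⁻¹ := h2
        _ = 2 * Real.exp (-(k*(x+a₀))) := by rw [Real.exp_neg]; field_simp
    have h2 : ((Real.cosh (k*(x+a₀)))⁻¹) ^ (2/μ:ℝ) ≤ (2 * Real.exp (-(k*(x+a₀)))) ^ (2/μ:ℝ) :=
      Real.rpow_le_rpow (hqpos x).le hub (by positivity)
    have h3 : (2 * Real.exp (-(k*(x+a₀)))) ^ (2/μ:ℝ)
        = 2^(2/μ:ℝ) * Real.exp (-(k*(x+a₀)) * (2/μ)) := by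
      rw [Real.mul_rpow (by norm_num) (Real.exp_pos _).le, ← Real.exp_mul]
    have h4 : Real.exp (-(k*(x+a₀)) * (2/μ)) ≤ Real.exp (-(2*s) * x) := by
      apply Real.exp_le_exp.2
      rw [hk_def, show -(μ*s*(x+a₀)) * (2/μ) = -(2*s)*(x+a₀) by field_simp]
      have hx' : (0:ℝ) < x := hx
      nlinarith
    rw [hw2 x]
    calc c^2 * ((Real.cosh (k*(x+a₀)))⁻¹) ^ (2/μ:ℝ)
        ≤ c^2 * (2^(2/μ:ℝ) * Real.exp (-(2*s) * x)) := by
          apply mul_le_mul_of_nonneg_left _ (by positivity)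
          exact h2.trans (by rw [h3]; exact mul_le_mul_of_nonneg_left h4 (by positivity))
      _ = (c^2 * 2 ^ (2/μ:ℝ)) * Real.exp (-(2*s) * x) := by ring
  -- continuity
  have hucont : Continuous fun x : ℝ => k * (x + a₀) :=
    continuous_const.mul (continuous_id.add continuous_const)
  have hqc : Continuous fun x : ℝ => (Real.cosh (k*(x+a₀)))⁻¹ :=
    (Real.continuous_cosh.comp hucont).inv₀ fun x => (hchpos x).ne'
  have hwcont : Continuous w := by
    rw [hwW]
    exact continuous_const.mul (hqc.rpow_const fun x => Or.inr (by positivity))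
  have hVcont : Continuous (Vaux s k a₀ w) := by
    unfold Vaux
    exact ((continuous_const.mul
      ((Real.continuous_sinh.comp hucont).mul hqc))).mul hwcont
  -- integrability of w^2
  have hexp_int : IntegrableOn (fun x => (c^2 * 2^(2/μ:ℝ)) * Real.exp (-(2*s)*x)) (Ioi (0:ℝ)) :=
    (exp_neg_integrableOn_Ioi 0 (by positivity : (0:ℝ) < 2*s)).const_mul _
  have hIntW2 : IntegrableOn (fun x => w x ^ 2) (Ioi (0:ℝ)) := by
    apply Integrable.mono' hexp_int ((hwcont.pow 2).aestronglyMeasurable)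
    rw [ae_restrict_iff' measurableSet_Ioi]
    filter_upwards with x hx
    rw [Real.norm_eq_abs, abs_of_nonneg (sq_nonneg _)]
    exact hbound x hx
  have hq_le_one : ∀ x : ℝ, ((Real.cosh (k*(x+a₀)))⁻¹) ^ 2 ≤ 1 := by
    intro x
    have h1 := Real.one_le_cosh (k*(x+a₀))
    have h2 : (Real.cosh (k*(x+a₀)))⁻¹ ≤ 1 := by
      rw [inv_le_one_iff₀]; right; exact h1
    nlinarith [hqpos x]
  -- integrability of w^(2μ+2)
  have hIntB : IntegrableOn (fun x => w x ^ (2*μ+2)) (Ioi (0:ℝ)) := by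
    apply Integrable.mono' (hIntW2.const_mul ((μ+1)*ω))
      ((hwcont.rpow_const fun x => Or.inl (hwpos x).ne').aestronglyMeasurable)
    rw [ae_restrict_iff' measurableSet_Ioi]
    filter_upwards with x hx
    rw [Real.norm_eq_abs, abs_of_nonneg (Real.rpow_nonneg (hwpos x).le _), hpow x]
    nlinarith [mul_nonneg (mul_nonneg hb.le (sq_nonneg (w x)))
      (sub_nonneg.2 (hq_le_one x))]
  -- V^2 bound and integrability
  have hVsq_le : ∀ x : ℝ, Vaux s k a₀ w x ^ 2 ≤ ω * w x ^ 2 := by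
    intro x
    have h1 : (0:ℝ) < Real.cosh (k*(x+a₀)) ^ 2 := by positivity
    have h2 : Vaux s k a₀ w x ^ 2 = s^2 * ((Real.sinh (k*(x+a₀))^2 / Real.cosh (k*(x+a₀))^2) * w x ^2) := by
      simp only [Vaux]
      field_simp
    have h3 : Real.sinh (k*(x+a₀))^2 / Real.cosh (k*(x+a₀))^2 ≤ 1 := by
      rw [div_le_one h1, Real.sinh_sq]; linarith
    rw [h2, hs2]
    have h4 : (Real.sinh (k*(x+a₀))^2 / Real.cosh (k*(x+a₀))^2) * w x ^2 ≤ w x ^2 := by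
      nlinarith [sq_nonneg (w x), div_nonneg (sq_nonneg (Real.sinh (k*(x+a₀)))) h1.le]
    exact mul_le_mul_of_nonneg_left h4 hω0.le
  have hIntV2 : IntegrableOn (fun x => Vaux s k a₀ w x ^ 2) (Ioi (0:ℝ)) := by
    apply Integrable.mono' (hIntW2.const_mul ω) (((hVcont.pow 2)).aestronglyMeasurable)
    rw [ae_restrict_iff' measurableSet_Ioi]
    filter_upwards with x hx
    rw [Real.norm_eq_abs, abs_of_nonneg (sq_nonneg _)]
    exact hVsq_le x
  have hIntA : IntegrableOn
      (fun x => Vaux s k a₀ w x ^ 2 + ω * w x ^ 2 - (2*μ+1) * w x ^ (2*μ+2)) (Ioi (0:ℝ)) :=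
    (hIntV2.add (hIntW2.const_mul ω)).sub (hIntB.const_mul (2*μ+1))
  -- F = w * V and its derivative
  have hFd : ∀ x : ℝ, HasDerivAt (fun x => w x * Vaux s k a₀ w x)
      ((Vaux s k a₀ w x ^ 2 + ω * w x ^ 2 - (2*μ+1) * w x ^ (2*μ+2)) + (2*μ) * w x ^ (2*μ+2)) x := by
    intro x
    have h := (hderivw x).mul (hderivV x)
    refine h.congr_deriv ?_
    symm
    rw [hpow x]
    ring
  -- limit of F at infinity
  have hVabs : ∀ x : ℝ, |Vaux s k a₀ w x| ≤ s * w x := by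
    intro x
    have h1 : Vaux s k a₀ w x ^ 2 ≤ (s * w x) ^ 2 := by rw [mul_pow, hs2]; exact hVsq_le x
    have h2 := Real.sqrt_le_sqrt h1
    rwa [Real.sqrt_sq_eq_abs, Real.sqrt_sq (mul_nonneg hs.le (hwpos x).le)] at h2
  have hFtend : Filter.Tendsto (fun x => w x * Vaux s k a₀ w x) Filter.atTop (nhds 0) := by
    have hgtend : Filter.Tendsto (fun x => s * ((c^2 * 2^(2/μ:ℝ)) * Real.exp (-(2*s)*x)))
        Filter.atTop (nhds 0) := by
      have htop : Filter.Tendsto (fun x : ℝ => (2*s) * x) Filter.atTop Filter.atTop :=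
        Filter.tendsto_id.const_mul_atTop (by positivity)
      have h := Real.tendsto_exp_neg_atTop_nhds_zero.comp htop
      have h2 := h.const_mul (s * (c^2 * 2^(2/μ:ℝ)))
      rw [mul_zero] at h2
      apply h2.congr
      intro x
      simp only [Function.comp_apply, neg_mul]
      ring
    apply squeeze_zero_norm' _ hgtend
    · filter_upwards [Filter.eventually_gt_atTop (0:ℝ)] with x hx
      have h1 : ‖w x * Vaux s k a₀ w x‖ ≤ w x * (s * w x) := by
        rw [Real.norm_eq_abs, abs_mul, abs_of_pos (hwpos x)]
        exact mul_le_mul_of_nonneg_left (hVabs x) (hwpos x).le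
      refine h1.trans ?_
      have := hbound x hx
      nlinarith [hwpos x, hs]
  -- FTC on [0, ∞)
  have hIout : (∫ x in Ioi (0:ℝ),
        ((Vaux s k a₀ w x ^ 2 + ω * w x ^ 2 - (2*μ+1) * w x ^ (2*μ+2)) + (2*μ) * w x ^ (2*μ+2)))
      = 0 - w 0 * Vaux s k a₀ w 0 :=
    integral_Ioi_of_hasDerivAt_of_tendsto' (fun x _ => hFd x)
      (hIntA.add (hIntB.const_mul (2*μ))) hFtend
  have hV0 : Vaux s k a₀ w 0 = α / N * w 0 := by
    simp only [Vaux]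
    rw [zero_add]
    have ht : Real.sinh (k*a₀) * (Real.cosh (k*a₀))⁻¹ = r := by
      rw [← htanh, Real.tanh_eq_sinh_div_cosh, div_eq_mul_inv]
    rw [ht, hr_def, abs_of_neg hα]
    field_simp
  have hsplit : (∫ x in Ioi (0:ℝ),
        ((Vaux s k a₀ w x ^ 2 + ω * w x ^ 2 - (2*μ+1) * w x ^ (2*μ+2)) + (2*μ) * w x ^ (2*μ+2)))
      = (∫ x in Ioi (0:ℝ), (Vaux s k a₀ w x ^ 2 + ω * w x ^ 2 - (2*μ+1) * w x ^ (2*μ+2)))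
        + (2*μ) * ∫ x in Ioi (0:ℝ), w x ^ (2*μ+2) := by
    rw [integral_add hIntA (hIntB.const_mul (2*μ)), integral_const_mul]
  have hA_val : (∫ x in Ioi (0:ℝ), (Vaux s k a₀ w x ^ 2 + ω * w x ^ 2 - (2*μ+1) * w x ^ (2*μ+2)))
      = -(α / N * w 0 ^ 2) - (2*μ) * ∫ x in Ioi (0:ℝ), w x ^ (2*μ+2) := by
    rw [hsplit, hV0] at hIout
    linear_combination hIout
  -- positivity of ∫ B
  have hBpos : 0 < ∫ x in Ioi (0:ℝ), w x ^ (2*μ+2) := by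
    have hnn : 0 ≤ᵐ[volume.restrict (Ioi (0:ℝ))] fun x => w x ^ (2*μ+2) :=
      Filter.Eventually.of_forall fun x => (Real.rpow_pos_of_pos (hwpos x) _).le
    rw [setIntegral_pos_iff_support_of_nonneg_ae hnn hIntB]
    have hsupp : (Function.support fun x => w x ^ (2*μ+2)) ∩ Ioi 0 = Ioi 0 :=
      inter_eq_self_of_subset_right fun x _ =>
        Function.mem_support.2 (Real.rpow_pos_of_pos (hwpos x) _).ne'
    rw [hsupp, Real.volume_Ioi]
    exact ENNReal.zero_lt_top
  -- rewrite the goal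
  have hderiv_eq : deriv w = Vaux s k a₀ w := funext fun x => (hderivw x).deriv
  have hgoal1 : (N : ℝ) * (∫ x in Ioi (0 : ℝ),
        ((deriv w x) ^ 2 + ω * (w x) ^ 2 - (2 * μ + 1) * w x ^ (2 * μ + 2)))
      + α * (w 0) ^ 2
      = -(2 * μ * N) * ∫ x in Ioi (0 : ℝ), w x ^ (2 * μ + 2) := by
    rw [hderiv_eq]
    rw [hA_val]
    field_simp
    ring
  refine ⟨hgoal1, ?_⟩
  rw [hgoal1]
  have h2μN : (0:ℝ) < 2 * μ * N := by positivity
  nlinarith [hBpos, h2μN]
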